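/- Let ε > 0 and for a separately continuous k-linear map β : E₁ × ⋯ × E_k → F and j ∈ {2,…,k}, let 𝒮 be a set of bounded subsets of E_j × ⋯ × E_k such that for every M ∈ 𝒮 there is N ∈ 𝒮 with t·M ⊆ N for all scalars |t| ≤ 1. Then the following are equivalent: (a) for each M ∈ 𝒮 and 0-neighbourhood W ⊆ F there is a 0-neighbourhood V ⊆ E₁ × ⋯ × E_{j−1} with β(V × M) ⊆ W; (c) β restricted to E₁ × ⋯ × E_{j−1} × M is continuous for each M ∈ 𝒮. -/

import Mathlib

open Filter Topology Pointwise

/-- Splicing a tuple indexed by `{i // i < m}` and a tuple indexed by `{i // ¬ i < m}`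
into a full tuple indexed by `Fin k`. -/
def splice {k m : ℕ} {E : Fin k → Type*}
    (a : ∀ i : {i : Fin k // (i : ℕ) < m}, E i.1)
    (b : ∀ i : {i : Fin k // ¬ (i : ℕ) < m}, E i.1) (i : Fin k) : E i :=
  if h : (i : ℕ) < m then a ⟨i, h⟩ else b ⟨i, h⟩

section aux
variable {k m : ℕ} {E : Fin k → Type*} [∀ i, AddCommGroup (E i)] [∀ i, Module ℝ (E i)]
  {F : Type*} [AddCommGroup F] [Module ℝ F]

lemma splice_smul (β : MultilinearMap ℝ E F)
    (s : {i : Fin k // (i : ℕ) < m} → ℝ) (t : {i : Fin k // ¬ (i : ℕ) < m} → ℝ)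
    (a : ∀ i : {i : Fin k // (i : ℕ) < m}, E i.1)
    (b : ∀ i : {i : Fin k // ¬ (i : ℕ) < m}, E i.1) :
    β (splice (fun l => s l • a l) (fun l => t l • b l))
      = ((∏ l, s l) * ∏ l, t l) • β (splice a b) := by
  have h1 : splice (fun l => s l • a l) (fun l => t l • b l)
      = fun i : Fin k => (if h : (i : ℕ) < m then s ⟨i, h⟩ else t ⟨i, h⟩) • splice a b i := by
    funext i
    by_cases h : (i : ℕ) < m <;> simp [splice, h]
  rw [h1, β.map_smul_univ, Fintype.prod_dite]

omit [(i : Fin k) → Module ℝ (E i)] in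
lemma splice_update (a : ∀ i : {i : Fin k // (i : ℕ) < m}, E i.1)
    (b : ∀ i : {i : Fin k // ¬ (i : ℕ) < m}, E i.1)
    (l : {i : Fin k // (i : ℕ) < m}) (x : E l.1) :
    splice (Function.update a l x) b = Function.update (splice a b) l.1 x := by
  funext i
  by_cases h : (i : ℕ) < m
  · rcases eq_or_ne i l.1 with heq | hne
    · subst heq
      have hl : (⟨l.1, h⟩ : {i : Fin k // (i : ℕ) < m}) = l := Subtype.ext rfl
      simp [splice, h, hl]
    · have hl : (⟨i, h⟩ : {i : Fin k // (i : ℕ) < m}) ≠ l := fun hc => hne (congrArg Subtype.val hc)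
      simp [splice, h, Function.update_of_ne hl, Function.update_of_ne hne]
  · have hne : i ≠ l.1 := fun hc => h (hc ▸ l.2)
    simp [splice, h, Function.update_of_ne hne]

lemma splice_zero (β : MultilinearMap ℝ E F) (hm : 0 < m) (hk : 0 < k)
    (b : ∀ i : {i : Fin k // ¬ (i : ℕ) < m}, E i.1) :
    β (splice (0 : ∀ i : {i : Fin k // (i : ℕ) < m}, E i.1) b) = 0 := by
  have h0 : ((⟨0, hk⟩ : Fin k) : ℕ) < m := hm
  apply β.map_coord_zero (⟨0, hk⟩ : Fin k)
  simp [splice, h0]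

end aux

section key
variable {k m : ℕ} {E : Fin k → Type*} [∀ i, AddCommGroup (E i)] [∀ i, Module ℝ (E i)]
  [∀ i, TopologicalSpace (E i)] [∀ i, IsTopologicalAddGroup (E i)]
  [∀ i, ContinuousSMul ℝ (E i)] [∀ i, LocallyConvexSpace ℝ (E i)]
  {F : Type*} [AddCommGroup F] [Module ℝ F] [TopologicalSpace F]
  [IsTopologicalAddGroup F] [ContinuousSMul ℝ F] [LocallyConvexSpace ℝ F]

/-- Key uniform estimate: hypocontinuity gives uniform smallness of
`β (splice a b) - β (splice a₀ b)` for `a` near `a₀`, `b ∈ M`. -/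
lemma key_estimate (β : MultilinearMap ℝ E F) (hm : 0 < m) (hk : 0 < k)
    (M : Set (∀ i : {i : Fin k // ¬ (i : ℕ) < m}, E i.1))
    (a₀ : ∀ i : {i : Fin k // (i : ℕ) < m}, E i.1)
    (hyp : ∀ W ∈ 𝓝 (0 : F),
      ∃ V ∈ 𝓝 (0 : ∀ i : {i : Fin k // (i : ℕ) < m}, E i.1),
        ∀ a ∈ V, ∀ b ∈ M, β (splice a b) ∈ W)
    (W : Set F) (hW : W ∈ 𝓝 (0 : F)) :
    ∃ V ∈ 𝓝 a₀, ∀ a ∈ V, ∀ b ∈ M, β (splice a b) - β (splice a₀ b) ∈ W := by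
  classical
  set ι₁ := {i : Fin k // (i : ℕ) < m}
  haveI : Nonempty ι₁ := ⟨⟨⟨0, hk⟩, hm⟩⟩
  set n := Fintype.card ι₁ with hn_def
  have hn : 0 < n := Fintype.card_pos
  -- balanced convex W₂ ⊆ W
  obtain ⟨W₂, ⟨hW₂n, hW₂bal, hW₂conv⟩, hW₂sub⟩ :=
    (nhds_hasBasis_absConvex ℝ F).mem_iff.1 hW
  -- V₀ from hypocontinuity
  obtain ⟨V₀, hV₀, hV₀p⟩ := hyp W₂ hW₂n
  -- extract product neighbourhood
  rw [nhds_pi, Filter.mem_pi] at hV₀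
  obtain ⟨I, _, t, ht, htsub⟩ := hV₀
  have htuniv : Set.pi Set.univ t ⊆ V₀ := fun x hx => htsub fun i _ => hx i trivial
  -- refine to balanced convex pieces
  have hexV : ∀ l : ι₁, ∃ V', V' ∈ 𝓝 (0 : E l.1) ∧ Balanced ℝ V' ∧ Convex ℝ V' ∧ V' ⊆ t l := by
    intro l
    obtain ⟨V', ⟨h1, h2, h3⟩, h4⟩ := (nhds_hasBasis_absConvex ℝ (E l.1)).mem_iff.1 (ht l)
    exact ⟨V', h1, h2, h3, h4⟩
  choose V' hV'n hV'bal hV'conv hV'sub using hexV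
  have h0V' : ∀ l : ι₁, (0 : E l.1) ∈ V' l := fun l => mem_of_mem_nhds (hV'n l)
  -- absorb a₀
  have hexr : ∀ l : ι₁, ∃ r : ℝ, 1 ≤ r ∧ a₀ l ∈ r • V' l := by
    intro l
    obtain ⟨c, hc⟩ := absorbs_iff_norm.1 (absorbent_nhds_zero (𝕜 := ℝ) (hV'n l) (a₀ l))
    refine ⟨max c 1, le_max_right _ _, ?_⟩
    have : ‖max c 1‖ = max c 1 := Real.norm_of_nonneg (le_trans zero_le_one (le_max_right _ _))
    exact hc (max c 1) (by rw [this]; exact le_max_left _ _) rfl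
  choose r hr1 hra using hexr
  set P := ∏ l : ι₁, (r l + 1) with hP_def
  have hP1 : 1 ≤ P := by
    rw [hP_def]
    calc (1 : ℝ) = ∏ _l : ι₁, (1 : ℝ) := by simp
      _ ≤ ∏ l : ι₁, (r l + 1) :=
          Finset.prod_le_prod (fun l _ => zero_le_one) (fun l _ => by linarith [hr1 l])
  have hP0 : 0 < P := lt_of_lt_of_le one_pos hP1
  set δ : ℝ := ((n : ℝ) * P)⁻¹ with hδ_def
  have hnpos : (0 : ℝ) < n := Nat.cast_pos.2 hn
  have hδpos : 0 < δ := inv_pos.2 (mul_pos hnpos hP0)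
  have hn1 : (1 : ℝ) ≤ (n : ℝ) := Nat.one_le_cast.2 hn
  have hδ1 : δ ≤ 1 := by
    rw [hδ_def]
    have h1 : (1 : ℝ) ≤ (n : ℝ) * P := by nlinarith
    calc ((n : ℝ) * P)⁻¹ ≤ 1⁻¹ := by
            apply inv_anti₀ one_pos h1
      _ = 1 := inv_one
  -- the neighbourhood of a₀
  set V : Set (∀ l : ι₁, E l.1) := Set.pi Set.univ (fun l => {x : E l.1 | x - a₀ l ∈ δ • V' l})
    with hV_def
  have hVmem : V ∈ 𝓝 a₀ := by
    apply set_pi_mem_nhds Set.finite_univ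
    intro l _
    have h1 : δ • V' l ∈ 𝓝 (0 : E l.1) := (set_smul_mem_nhds_zero_iff hδpos.ne').2 (hV'n l)
    have h2 : Continuous fun x : E l.1 => x - a₀ l := continuous_id.sub continuous_const
    have := (h2.continuousAt (x := a₀ l)).preimage_mem_nhds (by simpa using h1)
    exact this
  refine ⟨V, hVmem, ?_⟩
  intro a ha b hb
  -- telescoping
  set e : ι₁ ≃ Fin n := Fintype.equivFin ι₁ with he_def
  set h : ℕ → ∀ l : ι₁, E l.1 := fun q l => if ((e l) : ℕ) < q then a l else a₀ l with hh_def
  have hh0 : h 0 = a₀ := by funext l; simp [hh_def]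
  have hhn : h n = a := by funext l; simp [hh_def, (e l).isLt]
  have htel : β (splice a b) - β (splice a₀ b)
      = ∑ q ∈ Finset.range n, (β (splice (h (q + 1)) b) - β (splice (h q) b)) := by
    rw [Finset.sum_range_sub (fun q => β (splice (h q) b)), hh0, hhn]
  have keyterm : ∀ q, q < n → ∃ w ∈ W₂,
      β (splice (h (q + 1)) b) - β (splice (h q) b) = ((n : ℝ))⁻¹ • w := by
    intro q hq
    set i₀ : ι₁ := e.symm ⟨q, hq⟩ with hi₀_def
    have hei₀ : (e i₀ : ℕ) = q := by rw [hi₀_def, Equiv.apply_symm_apply]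
    have hup1 : h (q + 1) = Function.update (h q) i₀ (a i₀) := by
      funext l
      rcases eq_or_ne l i₀ with rfl | hne
      · simp [hh_def, hei₀, Function.update_self]
      · have hq' : (e l : ℕ) ≠ q := by
          intro hc
          apply hne
          have : e l = ⟨q, hq⟩ := Fin.ext hc
          rw [← Equiv.symm_apply_apply e l, this, hi₀_def]
        rw [Function.update_of_ne hne]
        have hiff : ((e l : ℕ) < q + 1) ↔ ((e l : ℕ) < q) := by omega
        simp only [hh_def, hiff]
    have hup0 : h q = Function.update (h q) i₀ (a₀ i₀) := by
      funext l
      rcases eq_or_ne l i₀ with rfl | hne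
      · simp [hh_def, hei₀, Function.update_self]
      · rw [Function.update_of_ne hne]
    have hdiff : β (splice (Function.update (h q) i₀ (a i₀ - a₀ i₀)) b)
        = β (splice (h (q + 1)) b) - β (splice (h q) b) := by
      rw [splice_update, MultilinearMap.map_update_sub, ← splice_update, ← splice_update,
        ← hup1, ← hup0]
    -- decompose the tuple
    set s : ι₁ → ℝ := fun l => if l = i₀ then δ else r l + 1 with hs_def
    have hdecomp : ∀ l : ι₁, ∃ v ∈ V' l, Function.update (h q) i₀ (a i₀ - a₀ i₀) l = s l • v := by
      intro l
      rcases eq_or_ne l i₀ with heq | hne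
      · subst heq
        obtain ⟨v, hv, hveq⟩ := Set.mem_smul_set.1 (ha i₀ trivial)
        exact ⟨v, hv, by rw [Function.update_self, show s i₀ = δ by simp [hs_def], ← hveq]⟩
      · rw [Function.update_of_ne hne]
        have hmem : h q l ∈ r l • V' l + V' l := by
          by_cases hcase : (e l : ℕ) < q
          · have h1 : h q l = a l := by simp [hh_def, hcase]
            have h2 : a l - a₀ l ∈ δ • V' l := ha l trivial
            have h3 : a l - a₀ l ∈ V' l := by
              have := (hV'bal l) δ (by rw [Real.norm_of_nonneg hδpos.le]; exact hδ1)
              exact this h2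
            rw [h1, show a l = a₀ l + (a l - a₀ l) by abel]
            exact Set.add_mem_add (hra l) h3
          · have h1 : h q l = a₀ l := by simp [hh_def, hcase]
            rw [h1, show a₀ l = a₀ l + 0 by abel]
            exact Set.add_mem_add (hra l) (h0V' l)
        have heq : (r l + 1) • V' l = r l • V' l + (1 : ℝ) • V' l :=
          Convex.add_smul (hV'conv l) (le_trans zero_le_one (hr1 l)) zero_le_one
        rw [one_smul] at heq
        have hmem' : h q l ∈ (r l + 1) • V' l := by rw [heq]; exact hmem
        obtain ⟨v, hv, hveq⟩ := Set.mem_smul_set.1 hmem'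
        exact ⟨v, hv, by rw [show s l = r l + 1 by simp [hs_def, hne], ← hveq]⟩
    choose v hvV hveq using hdecomp
    have hctuple : Function.update (h q) i₀ (a i₀ - a₀ i₀) = fun l => s l • v l :=
      funext fun l => hveq l
    have hvV₀ : v ∈ V₀ := htuniv fun l _ => hV'sub l (hvV l)
    have hw2 : β (splice v b) ∈ W₂ := hV₀p v hvV₀ b hb
    have hsmul : β (splice (fun l => s l • v l) b) = (∏ l, s l) • β (splice v b) := by
      have h := splice_smul β s (fun _ => (1 : ℝ)) v b
      simpa using h
    -- bound the product
    have hs_nonneg : ∀ l : ι₁, 0 ≤ s l := by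
      intro l
      rcases eq_or_ne l i₀ with heq | hne
      · rw [show s l = δ by simp [hs_def, heq]]; exact hδpos.le
      · rw [show s l = r l + 1 by simp [hs_def, hne]]; linarith [hr1 l]
    have hprod_nonneg : 0 ≤ ∏ l, s l := Finset.prod_nonneg fun l _ => hs_nonneg l
    have hprod_le : (∏ l, s l) ≤ (n : ℝ)⁻¹ := by
      have h1 : (∏ l, s l) = s i₀ * ∏ l ∈ Finset.univ.erase i₀, s l :=
        (Finset.mul_prod_erase Finset.univ s (Finset.mem_univ i₀)).symm
      have h2 : (∏ l ∈ Finset.univ.erase i₀, s l) ≤ P := by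
        have heq2 : (∏ l ∈ Finset.univ.erase i₀, s l)
            = ∏ l ∈ Finset.univ.erase i₀, (r l + 1) := by
          apply Finset.prod_congr rfl
          intro l hl
          have hlne : l ≠ i₀ := Finset.ne_of_mem_erase hl
          simp [hs_def, hlne]
        have hpos : (0 : ℝ) ≤ ∏ l ∈ Finset.univ.erase i₀, (r l + 1) :=
          Finset.prod_nonneg fun l _ => by linarith [hr1 l]
        have hPsplit : P = (r i₀ + 1) * ∏ l ∈ Finset.univ.erase i₀, (r l + 1) := by
          rw [hP_def, ← Finset.mul_prod_erase Finset.univ (fun l => r l + 1) (Finset.mem_univ i₀)]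
        rw [heq2, hPsplit]
        nlinarith [hr1 i₀, hpos]
      have hsi₀ : s i₀ = δ := by simp [hs_def]
      calc (∏ l, s l) = s i₀ * ∏ l ∈ Finset.univ.erase i₀, s l := h1
        _ ≤ δ * P := by
            rw [hsi₀]
            apply mul_le_mul_of_nonneg_left h2 hδpos.le
        _ = (n : ℝ)⁻¹ := by
            rw [hδ_def, mul_inv, mul_assoc, inv_mul_cancel₀ hP0.ne', mul_one]
    -- assemble the term
    refine ⟨((n : ℝ) * ∏ l, s l) • β (splice v b), ?_, ?_⟩
    · apply hW₂bal.smul_mem _ hw2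
      rw [Real.norm_of_nonneg (by positivity)]
      calc (n : ℝ) * ∏ l, s l ≤ (n : ℝ) * (n : ℝ)⁻¹ :=
            mul_le_mul_of_nonneg_left hprod_le hnpos.le
        _ = 1 := mul_inv_cancel₀ hnpos.ne'
    · rw [← hdiff, hctuple, hsmul, smul_smul, ← mul_assoc,
        inv_mul_cancel₀ hnpos.ne', one_mul]
  -- assemble the sum
  rw [htel]
  have hterms : ∀ q ∈ Finset.range n, ∃ w ∈ W₂,
      β (splice (h (q + 1)) b) - β (splice (h q) b) = ((n : ℝ))⁻¹ • w :=
    fun q hq => keyterm q (Finset.mem_range.1 hq)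
  choose! w hwW hweq using hterms
  rw [Finset.sum_congr rfl hweq]
  apply hW₂sub
  refine hW₂conv.sum_mem (fun q _ => by positivity) ?_ (fun q hq => hwW q hq)
  rw [Finset.sum_const, Finset.card_range, nsmul_eq_mul, mul_inv_cancel₀ hnpos.ne']

end key

/-- For a separately continuous `k`-linear map `β : E₁ × ⋯ × E_k → F` between locally
convex real spaces such that `β(x,·) : E_j × ⋯ × E_k → F` is continuous for each
`x ∈ E₁ × ⋯ × E_{j−1}`, and a set `𝒮` of bounded subsets of `E_j × ⋯ × E_k` such that
for every `M ∈ 𝒮` there is `N ∈ 𝒮` containing `t·M` for all `|t| ≤ 1`, the following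
are equivalent:
(a) for each `M ∈ 𝒮` and `0`-neighbourhood `W ⊆ F` there is a `0`-neighbourhood
    `V ⊆ E₁ × ⋯ × E_{j−1}` with `β(V × M) ⊆ W`;
(c) `β` restricted to `E₁ × ⋯ × E_{j−1} × M` is continuous for each `M ∈ 𝒮`. -/
theorem hypocontinuity_iff_continuousOn {k : ℕ} (hk : 2 ≤ k)
    (ε : ℝ) (hε : 0 < ε)
    {E : Fin k → Type*} [∀ i, AddCommGroup (E i)] [∀ i, Module ℝ (E i)]
    [∀ i, TopologicalSpace (E i)] [∀ i, IsTopologicalAddGroup (E i)]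
    [∀ i, ContinuousSMul ℝ (E i)] [∀ i, LocallyConvexSpace ℝ (E i)]
    {F : Type*} [AddCommGroup F] [Module ℝ F] [TopologicalSpace F]
    [IsTopologicalAddGroup F] [ContinuousSMul ℝ F] [LocallyConvexSpace ℝ F]
    (β : MultilinearMap ℝ E F) (j : ℕ) (hj2 : 2 ≤ j) (hjk : j ≤ k)
    (hsep : ∀ (i : Fin k) (x : ∀ i, E i), Continuous fun y : E i => β (Function.update x i y))
    (htail : ∀ a : ∀ i : {i : Fin k // (i : ℕ) < j - 1}, E i.1,
      Continuous fun b : ∀ i : {i : Fin k // ¬ (i : ℕ) < j - 1}, E i.1 => β (splice a b))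
    (𝒮 : Set (Set (∀ i : {i : Fin k // ¬ (i : ℕ) < j - 1}, E i.1)))
    (h𝒮bdd : ∀ M ∈ 𝒮, Bornology.IsVonNBounded ℝ M)
    (h𝒮bal : ∀ M ∈ 𝒮, ∃ N ∈ 𝒮, ∀ t : ℝ, |t| ≤ 1 → t • M ⊆ N) :
    (∀ M ∈ 𝒮, ∀ W ∈ 𝓝 (0 : F),
        ∃ V ∈ 𝓝 (0 : ∀ i : {i : Fin k // (i : ℕ) < j - 1}, E i.1),
          ∀ a ∈ V, ∀ b ∈ M, β (splice a b) ∈ W) ↔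
      (∀ M ∈ 𝒮, ContinuousOn
        (fun p : (∀ i : {i : Fin k // (i : ℕ) < j - 1}, E i.1) ×
            (∀ i : {i : Fin k // ¬ (i : ℕ) < j - 1}, E i.1) => β (splice p.1 p.2))
        (Set.univ ×ˢ M)) := by
  classical
  have hm : 0 < j - 1 := by omega
  have hk0 : 0 < k := by omega
  constructor
  · -- (a) → (c)
    intro ha M hM
    rintro ⟨a₀, b₀⟩ hp
    have hkey := key_estimate β hm hk0 M a₀ (ha M hM)
    have h2 : Filter.Tendsto
        (fun p : (∀ i : {i : Fin k // (i : ℕ) < j - 1}, E i.1) ×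
            (∀ i : {i : Fin k // ¬ (i : ℕ) < j - 1}, E i.1) => β (splice a₀ p.2))
        (𝓝[Set.univ ×ˢ M] (a₀, b₀)) (𝓝 (β (splice a₀ b₀))) :=
      ((htail a₀).tendsto b₀).comp
        ((continuous_snd.tendsto (a₀, b₀)).mono_left nhdsWithin_le_nhds)
    have h1 : Filter.Tendsto
        (fun p : (∀ i : {i : Fin k // (i : ℕ) < j - 1}, E i.1) ×
            (∀ i : {i : Fin k // ¬ (i : ℕ) < j - 1}, E i.1) =>
          β (splice p.1 p.2) - β (splice a₀ p.2))
        (𝓝[Set.univ ×ˢ M] (a₀, b₀)) (𝓝 0) := by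
      rw [Filter.tendsto_def]
      intro W hW
      obtain ⟨V, hV, hVp⟩ := hkey W hW
      apply Filter.mem_of_superset
        (Filter.inter_mem (mem_nhdsWithin_of_mem_nhds (prod_mem_nhds hV Filter.univ_mem))
          self_mem_nhdsWithin)
      rintro ⟨a, b⟩ ⟨⟨haV, -⟩, -, hbM⟩
      exact hVp a haV b hbM
    have h3 := h1.add h2
    simp only [sub_add_cancel, zero_add] at h3
    exact h3
  · -- (c) → (a)
    intro hc M hM W hW
    rcases Set.eq_empty_or_nonempty M with rfl | ⟨b₀, hb₀⟩
    · exact ⟨Set.univ, Filter.univ_mem, fun a _ b hb => absurd hb (Set.notMem_empty b)⟩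
    obtain ⟨N, hN, hNbal⟩ := h𝒮bal M hM
    have h0N : (0 : ∀ i : {i : Fin k // ¬ (i : ℕ) < j - 1}, E i.1) ∈ N := by
      have h1 := hNbal 0 (by simp) (Set.smul_mem_smul_set (a := (0 : ℝ)) hb₀)
      simpa using h1
    obtain ⟨W₀, ⟨hW₀n, hW₀bal⟩, hW₀sub⟩ := (nhds_basis_balanced ℝ F).mem_iff.1 hW
    have hcN := hc N hN (0, 0) (Set.mk_mem_prod trivial h0N)
    have hf00 : β (splice (0 : ∀ i : {i : Fin k // (i : ℕ) < j - 1}, E i.1)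
        (0 : ∀ i : {i : Fin k // ¬ (i : ℕ) < j - 1}, E i.1)) = 0 := splice_zero β hm hk0 0
    rw [ContinuousWithinAt, Filter.tendsto_def] at hcN
    have hpre := hcN W₀ (by
      show W₀ ∈ 𝓝 (β (splice (0 : ∀ i : {i : Fin k // (i : ℕ) < j - 1}, E i.1) 0))
      rw [hf00]; exact hW₀n)
    rw [mem_nhdsWithin] at hpre
    obtain ⟨u, huo, hu0, husub⟩ := hpre
    obtain ⟨V, hV, U, hU, hVU⟩ := mem_nhds_prod_iff.1 (huo.mem_nhds hu0)
    obtain ⟨c, hc'⟩ := absorbs_iff_norm.1 (h𝒮bdd M hM hU)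
    set r : ℝ := max c 1 with hr_def
    have hr1 : 1 ≤ r := le_max_right _ _
    have hr0 : 0 < r := lt_of_lt_of_le one_pos hr1
    have hMU : M ⊆ r • U := hc' r (by
      rw [Real.norm_of_nonneg hr0.le]; exact le_max_left _ _)
    set n₁ := Fintype.card {i : Fin k // (i : ℕ) < j - 1} with hn₁
    set n₂ := Fintype.card {i : Fin k // ¬ (i : ℕ) < j - 1} with hn₂
    haveI : Nonempty {i : Fin k // (i : ℕ) < j - 1} := ⟨⟨⟨0, hk0⟩, hm⟩⟩
    have hn₁pos : 0 < n₁ := Fintype.card_pos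
    have hrn : 0 < r ^ n₂ := pow_pos hr0 _
    set s : ℝ := min 1 ((r ^ n₂)⁻¹) with hs_def
    have hs0 : 0 < s := lt_min one_pos (inv_pos.2 hrn)
    have hs1 : s ≤ 1 := min_le_left _ _
    refine ⟨s • V, (set_smul_mem_nhds_zero_iff hs0.ne').2 hV, ?_⟩
    intro a haV b hb
    obtain ⟨a', ha', rfl⟩ := Set.mem_smul_set.1 haV
    have hyU : r⁻¹ • b ∈ U :=
      (Set.mem_smul_set_iff_inv_smul_mem₀ hr0.ne' U b).1 (hMU hb)
    have hyN : r⁻¹ • b ∈ N := by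
      apply hNbal r⁻¹ ?_ (Set.smul_mem_smul_set hb)
      rw [abs_of_pos (inv_pos.2 hr0)]
      calc r⁻¹ ≤ 1⁻¹ := inv_anti₀ one_pos hr1
        _ = 1 := inv_one
    have hy : β (splice a' (r⁻¹ • b)) ∈ W₀ :=
      husub ⟨hVU (Set.mk_mem_prod ha' hyU), trivial, hyN⟩
    have hkey2 : β (splice (s • a') b) = (s ^ n₁ * r ^ n₂) • β (splice a' (r⁻¹ • b)) := by
      have hb' : (fun l : {i : Fin k // ¬ (i : ℕ) < j - 1} => r • (r⁻¹ • b) l) = b := by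
        funext l
        simp [smul_smul, mul_inv_cancel₀ hr0.ne']
      have h1 : splice (s • a') b
          = splice (fun l => s • a' l) (fun l => r • (r⁻¹ • b) l) := by rw [hb']; rfl
      rw [h1, splice_smul β (fun _ => s) (fun _ => r) a' (r⁻¹ • b)]
      simp [Finset.prod_const, hn₁, hn₂]
    have habs : ‖s ^ n₁ * r ^ n₂‖ ≤ 1 := by
      rw [Real.norm_of_nonneg (by positivity)]
      have h1 : s ^ n₁ ≤ s := pow_le_of_le_one hs0.le hs1 hn₁pos.ne'
      have h2 : s ≤ (r ^ n₂)⁻¹ := min_le_right _ _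
      calc s ^ n₁ * r ^ n₂ ≤ (r ^ n₂)⁻¹ * r ^ n₂ := by nlinarith
        _ = 1 := inv_mul_cancel₀ hrn.ne'
    exact hW₀sub (hkey2 ▸ hW₀bal.smul_mem habs hy)
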